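/- Let A and B be positive invertible bounded operators on a complex Hilbert space H. Then A ♯ B ≤ (A ♯ B) + (1/2)·(A ♯ B)·((A + B)⁻¹(A − B))² ≤ (A + B)/2. -/

import Mathlib

set_option synthInstance.maxHeartbeats 1000000
set_option maxHeartbeats 1000000

open scoped InnerProductSpace Pointwise

variable {H : Type*} [NormedAddCommGroup H] [InnerProductSpace ℂ H] [CompleteSpace H]

/-- The operator geometric mean `A ♯ B = A^(1/2) (A^(-1/2) B A^(-1/2))^(1/2) A^(1/2)`,
where square roots are given by the continuous functional calculus. -/
noncomputable def geomMean (A B : H →L[ℂ] H) : H →L[ℂ] H :=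
  CFC.sqrt A * CFC.sqrt (Ring.inverse (CFC.sqrt A) * B * Ring.inverse (CFC.sqrt A)) * CFC.sqrt A

section Aux

lemma aux_isUnit_of_mul_eq_one₂ {M : Type*} [Monoid M] {s b c : M}
    (h1 : s * b = 1) (h2 : c * s = 1) : IsUnit s := by
  have hbc : b = c := by
    calc b = 1 * b := (one_mul b).symm
    _ = c * s * b := by rw [h2]
    _ = c * (s * b) := by rw [mul_assoc]
    _ = c := by rw [h1, mul_one]
  exact ⟨⟨s, b, h1, by rw [hbc, h2]⟩, rfl⟩

lemma aux_ringInverse_mul {M : Type*} [MonoidWithZero M] {u v : M}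
    (hu : IsUnit u) (hv : IsUnit v) :
    Ring.inverse (u * v) = Ring.inverse v * Ring.inverse u := by
  rw [← hu.unit_spec, ← hv.unit_spec, ← Units.val_mul, Ring.inverse_unit, Ring.inverse_unit,
    Ring.inverse_unit, mul_inv_rev, Units.val_mul]

lemma aux_isSelfAdjoint_ringInverse {M : Type*} [Semiring M] [StarRing M] {a : M}
    (ha : IsSelfAdjoint a) : IsSelfAdjoint (Ring.inverse a) := by
  rw [IsSelfAdjoint, ← Ring.inverse_star, ha.star_eq]

lemma aux_isUnit_sqrt {a : H →L[ℂ] H} (ha : 0 ≤ a) (ha' : IsUnit a) : IsUnit (CFC.sqrt a) := by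
  obtain ⟨u, hu⟩ := ha'
  have h := CFC.sqrt_mul_sqrt_self a ha
  refine aux_isUnit_of_mul_eq_one₂ (b := CFC.sqrt a * ↑u⁻¹) (c := ↑u⁻¹ * CFC.sqrt a) ?_ ?_
  · rw [← mul_assoc, h, ← hu, u.mul_inv]
  · rw [mul_assoc, h, ← hu, u.inv_mul]

lemma geomMean_nonneg (a b : H →L[ℂ] H) : 0 ≤ geomMean a b := by
  have hs : IsSelfAdjoint (CFC.sqrt a) := .of_nonneg (CFC.sqrt_nonneg _)
  have ht : (0 : H →L[ℂ] H) ≤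
      CFC.sqrt (Ring.inverse (CFC.sqrt a) * b * Ring.inverse (CFC.sqrt a)) := CFC.sqrt_nonneg _
  simpa [geomMean, hs.star_eq] using star_left_conjugate_nonneg ht (CFC.sqrt a)

lemma geomMean_riccati {a b : H →L[ℂ] H} (ha : 0 ≤ a) (ha' : IsUnit a) (hb : 0 ≤ b) :
    geomMean a b * Ring.inverse a * geomMean a b = b := by
  set s := CFC.sqrt a with hs_def
  have hs_unit : IsUnit s := aux_isUnit_sqrt ha ha'
  have hs_sa : IsSelfAdjoint s := .of_nonneg (CFC.sqrt_nonneg _)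
  set si := Ring.inverse s with hsi_def
  have hsi_sa : IsSelfAdjoint si := aux_isSelfAdjoint_ringInverse hs_sa
  have hssi : s * si = 1 := Ring.mul_inverse_cancel s hs_unit
  have hsis : si * s = 1 := Ring.inverse_mul_cancel s hs_unit
  have hbc : 0 ≤ si * b * si := by
    simpa [hsi_sa.star_eq] using star_left_conjugate_nonneg hb si
  set t := CFC.sqrt (si * b * si) with ht_def
  have htt : t * t = si * b * si := CFC.sqrt_mul_sqrt_self _ hbc
  have hinv : Ring.inverse a = si * si := by
    rw [← CFC.sqrt_mul_sqrt_self a ha, aux_ringInverse_mul hs_unit hs_unit]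
  have e1 : ∀ x : H →L[ℂ] H, s * (si * x) = x := fun x => by rw [← mul_assoc, hssi, one_mul]
  have e2 : ∀ x : H →L[ℂ] H, si * (s * x) = x := fun x => by rw [← mul_assoc, hsis, one_mul]
  have e3 : ∀ x : H →L[ℂ] H, t * (t * x) = si * (b * (si * x)) := fun x => by
    rw [← mul_assoc, htt, mul_assoc, mul_assoc]
  show s * t * s * Ring.inverse a * (s * t * s) = b
  rw [hinv]
  simp only [mul_assoc, e1, e2, e3, hsis, mul_one, hssi]

lemma geomMean_eq_of_riccati {a b g : H →L[ℂ] H} (ha : 0 ≤ a) (ha' : IsUnit a) (hg : 0 ≤ g)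
    (h : g * Ring.inverse a * g = b) : geomMean a b = g := by
  set s := CFC.sqrt a with hs_def
  have hs_unit : IsUnit s := aux_isUnit_sqrt ha ha'
  have hs_sa : IsSelfAdjoint s := .of_nonneg (CFC.sqrt_nonneg _)
  set si := Ring.inverse s with hsi_def
  have hsi_sa : IsSelfAdjoint si := aux_isSelfAdjoint_ringInverse hs_sa
  have hssi : s * si = 1 := Ring.mul_inverse_cancel s hs_unit
  have hsis : si * s = 1 := Ring.inverse_mul_cancel s hs_unit
  have hinv : Ring.inverse a = si * si := by
    rw [← CFC.sqrt_mul_sqrt_self a ha, aux_ringInverse_mul hs_unit hs_unit]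
  set x := si * g * si with hx_def
  have hx : 0 ≤ x := by
    simpa [hx_def, hsi_sa.star_eq] using star_left_conjugate_nonneg hg si
  have hxx : x * x = si * b * si := by
    rw [← h, hinv]
    simp only [hx_def]
    simp only [mul_assoc]
  have hsqrt : CFC.sqrt (si * b * si) = x := by rw [← hxx, CFC.sqrt_mul_self x hx]
  show s * CFC.sqrt (si * b * si) * s = g
  rw [hsqrt, hx_def]
  have e1 : ∀ y : H →L[ℂ] H, s * (si * y) = y := fun y => by rw [← mul_assoc, hssi, one_mul]
  simp only [mul_assoc, e1, hsis, mul_one]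

lemma geomMean_conj {a b c : H →L[ℂ] H} (ha : 0 ≤ a) (ha' : IsUnit a) (hb : 0 ≤ b)
    (hc : 0 ≤ c) (hc' : IsUnit c) :
    geomMean (c * a * c) (c * b * c) = c * geomMean a b * c := by
  have hc_sa : IsSelfAdjoint c := .of_nonneg hc
  have hci_unit : IsUnit (Ring.inverse c) := isUnit_ringInverse.mpr hc'
  have hcci : c * Ring.inverse c = 1 := Ring.mul_inverse_cancel c hc'
  have hcic : Ring.inverse c * c = 1 := Ring.inverse_mul_cancel c hc'
  have hcac_nonneg : 0 ≤ c * a * c := by simpa [hc_sa.star_eq] using star_left_conjugate_nonneg ha c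
  have hcac_unit : IsUnit (c * a * c) := (hc'.mul ha').mul hc'
  have hG : 0 ≤ geomMean a b := geomMean_nonneg a b
  have hg : 0 ≤ c * geomMean a b * c := by
    simpa [hc_sa.star_eq] using star_left_conjugate_nonneg hG c
  refine geomMean_eq_of_riccati hcac_nonneg hcac_unit hg ?_
  have hinv : Ring.inverse (c * a * c) =
      Ring.inverse c * (Ring.inverse a * Ring.inverse c) := by
    rw [aux_ringInverse_mul (hc'.mul ha') hc', aux_ringInverse_mul hc' ha']
  rw [hinv]
  have key := geomMean_riccati ha ha' hb
  have e1 : ∀ y : H →L[ℂ] H, c * (Ring.inverse c * y) = y := fun y => by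
    rw [← mul_assoc, hcci, one_mul]
  have e2 : ∀ y : H →L[ℂ] H, Ring.inverse c * (c * y) = y := fun y => by
    rw [← mul_assoc, hcic, one_mul]
  calc c * geomMean a b * c * (Ring.inverse c * (Ring.inverse a * Ring.inverse c)) *
        (c * geomMean a b * c)
      = c * (geomMean a b * (Ring.inverse a * geomMean a b)) * c := by
        simp only [mul_assoc, e1, e2]
    _ = c * (geomMean a b * Ring.inverse a * geomMean a b) * c := by
        simp only [mul_assoc]
    _ = c * b * c := by rw [key]

lemma scalar_key {x : ℝ} (h0 : 0 ≤ x) (h1 : x ≤ 1) :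
    Real.sqrt (x * (1 - x)) + 1 / 2 * (Real.sqrt (x * (1 - x)) * (2 * x - 1) ^ 2) ≤ 1 / 2 := by
  set u := Real.sqrt (x * (1 - x)) with hu_def
  have hu : 0 ≤ u := Real.sqrt_nonneg _
  have hu2 : u ^ 2 = x * (1 - x) := Real.sq_sqrt (by nlinarith)
  nlinarith [mul_nonneg (sq_nonneg (2 * u - 1)) (by linarith : (0:ℝ) ≤ u + 1), sq_nonneg (2 * x - 1)]

end Aux

theorem operator_amgm_refinement (A B : H →L[ℂ] H)
    (hA : 0 ≤ A) (hA' : IsUnit A) (hB : 0 ≤ B) (hB' : IsUnit B) :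
    geomMean A B ≤
        geomMean A B + (1 / 2 : ℝ) • (geomMean A B * (Ring.inverse (A + B) * (A - B)) ^ 2) ∧
      geomMean A B + (1 / 2 : ℝ) • (geomMean A B * (Ring.inverse (A + B) * (A - B)) ^ 2) ≤
        (1 / 2 : ℝ) • (A + B) := by
  have hAB : 0 ≤ A + B := add_nonneg hA hB
  have hAB' : IsUnit (A + B) := CStarAlgebra.isUnit_of_le A (le_add_of_nonneg_right hB) ⟨hA, hA'⟩
  obtain ⟨S, hS_def⟩ : ∃ S', S' = CFC.sqrt (A + B) := ⟨_, rfl⟩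
  have hS : 0 ≤ S := by rw [hS_def]; exact CFC.sqrt_nonneg _
  have hS_sa : IsSelfAdjoint S := .of_nonneg hS
  have hS_unit : IsUnit S := by rw [hS_def]; exact aux_isUnit_sqrt hAB hAB'
  have hSS : S * S = A + B := by rw [hS_def]; exact CFC.sqrt_mul_sqrt_self _ hAB
  obtain ⟨X, hX_def⟩ : ∃ X', X' = Ring.inverse S := ⟨_, rfl⟩
  have hX_sa : IsSelfAdjoint X := by rw [hX_def]; exact aux_isSelfAdjoint_ringInverse hS_sa
  have hX_unit : IsUnit X := by rw [hX_def]; exact isUnit_ringInverse.mpr hS_unit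
  have hXS : X * S = 1 := by rw [hX_def]; exact Ring.inverse_mul_cancel S hS_unit
  have hSX : S * X = 1 := by rw [hX_def]; exact Ring.mul_inverse_cancel S hS_unit
  have hX : 0 ≤ X := by
    have h : X = X * S * X := by rw [mul_assoc, hSX, mul_one]
    rw [h]
    simpa [hX_sa.star_eq] using star_left_conjugate_nonneg hS X
  obtain ⟨A', hA'_def⟩ : ∃ A'', A'' = X * A * X := ⟨_, rfl⟩
  obtain ⟨B', hB'_def⟩ : ∃ B'', B'' = X * B * X := ⟨_, rfl⟩
  have hA'_nonneg : 0 ≤ A' := by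
    rw [hA'_def]; simpa [hX_sa.star_eq] using star_left_conjugate_nonneg hA X
  have hB'_nonneg : 0 ≤ B' := by
    rw [hB'_def]; simpa [hX_sa.star_eq] using star_left_conjugate_nonneg hB X
  have hA'_unit : IsUnit A' := by rw [hA'_def]; exact (hX_unit.mul hA').mul hX_unit
  have hA'_sa : IsSelfAdjoint A' := .of_nonneg hA'_nonneg
  have hsum : A' + B' = 1 := by
    rw [hA'_def, hB'_def, ← add_mul, ← mul_add, ← hSS]
    rw [show X * (S * S) * X = X * S * (S * X) by simp only [mul_assoc], hXS, hSX, one_mul]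
  have hB'_eq : B' = 1 - A' := by rw [← hsum]; abel
  -- spectrum of A' lies in (0, 1]
  have hspec : ∀ x ∈ spectrum ℝ A', 0 ≤ x ∧ x ≤ 1 ∧ x ≠ 0 := by
    intro x hx
    refine ⟨spectrum_nonneg_of_nonneg hA'_nonneg hx, ?_, ?_⟩
    · have hmem : (1 : ℝ) - x ∈ ({1} : Set ℝ) - spectrum ℝ A' :=
        Set.sub_mem_sub rfl hx
      rw [spectrum.singleton_sub_eq] at hmem
      have heq : (algebraMap ℝ (H →L[ℂ] H)) 1 - A' = B' := by
        rw [map_one, ← hB'_eq]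
      rw [heq] at hmem
      have := spectrum_nonneg_of_nonneg hB'_nonneg hmem
      linarith
    · rintro rfl
      exact spectrum.zero_notMem ℝ hA'_unit hx
  have hne : ∀ x ∈ spectrum ℝ A', x ≠ 0 := fun x hx => (hspec x hx).2.2
  -- the functions
  obtain ⟨f, hf_def⟩ : ∃ f' : ℝ → ℝ, f' = fun x => Real.sqrt (x * (1 - x)) := ⟨_, rfl⟩
  have hf_cont : ContinuousOn f (spectrum ℝ A') := by
    rw [hf_def]
    exact (Real.continuous_sqrt.comp (by continuity)).continuousOn
  obtain ⟨d, hd_def⟩ : ∃ d' : ℝ → ℝ, d' = fun x => x - (1 - x) := ⟨_, rfl⟩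
  have hd_cont : ContinuousOn d (spectrum ℝ A') := by
    rw [hd_def]; exact (by continuity : Continuous fun x : ℝ => x - (1 - x)).continuousOn
  have hf_nonneg : ∀ x ∈ spectrum ℝ A', 0 ≤ f x := by
    intro x _
    simp only [hf_def]
    positivity
  -- geomMean A' B' = cfc f A'
  have hinv_cont : ContinuousOn (fun x : ℝ => x⁻¹) (spectrum ℝ A') :=
    ContinuousOn.inv₀ continuousOn_id hne
  have hG'_cfc : geomMean A' B' = cfc f A' := by
    refine geomMean_eq_of_riccati hA'_nonneg hA'_unit (cfc_nonneg hf_nonneg) ?_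
    have hinv : Ring.inverse A' = cfc (fun x : ℝ => x⁻¹) A' := by
      rw [cfc_inv (fun x : ℝ => x) A' hne continuousOn_id hA'_sa, cfc_id' ℝ (a := A') hA'_sa]
    have m1 : cfc f A' * cfc (fun x : ℝ => x⁻¹) A' = cfc (fun x => f x * x⁻¹) A' :=
      (cfc_mul _ _ A' hf_cont hinv_cont).symm
    have m2 : cfc (fun x : ℝ => f x * x⁻¹) A' * cfc f A' = cfc (fun x => f x * x⁻¹ * f x) A' :=
      (cfc_mul _ _ A' (hf_cont.mul hinv_cont) hf_cont).symm
    have hone : (1 : H →L[ℂ] H) - A' = cfc (fun x : ℝ => 1 - x) A' := by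
      rw [cfc_sub _ _ A' (by fun_prop) (by fun_prop), cfc_const_one ℝ A' hA'_sa,
        cfc_id' ℝ (a := A') hA'_sa]
    rw [hinv, m1, m2, hB'_eq, hone]
    refine cfc_congr fun x hx => ?_
    obtain ⟨h0, h1, hne'⟩ := hspec x hx
    have hsq : f x * f x = x * (1 - x) := by
      simp only [hf_def]
      exact Real.mul_self_sqrt (by nlinarith)
    have h2 : f x * x⁻¹ * f x = f x * f x * x⁻¹ := by ring
    rw [h2, hsq, mul_comm x (1 - x), mul_assoc, mul_inv_cancel₀ hne', mul_one]
  -- congruence : X * geomMean A B * X = cfc f A'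
  obtain ⟨G, hG_def⟩ : ∃ G', G' = geomMean A B := ⟨_, rfl⟩
  rw [← hG_def]
  have hG_nonneg : 0 ≤ G := by rw [hG_def]; exact geomMean_nonneg A B
  have hXGX : X * G * X = cfc f A' := by
    rw [← hG'_cfc, hA'_def, hB'_def, hG_def]
    exact (geomMean_conj hA hA' hB hX hX_unit).symm
  -- cancellation rules
  have e1 : ∀ y : H →L[ℂ] H, S * (X * y) = y := fun y => by rw [← mul_assoc, hSX, one_mul]
  have e2 : ∀ y : H →L[ℂ] H, X * (S * y) = y := fun y => by rw [← mul_assoc, hXS, one_mul]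
  have hG_eq : G = S * (X * G * X) * S := by
    simp only [mul_assoc, e1, hXS, mul_one]
  have hinvAB : Ring.inverse (A + B) = X * X := by
    rw [← hSS, aux_ringInverse_mul hS_unit hS_unit, ← hX_def]
  -- the difference D
  have hD : X * (A - B) * X = cfc d A' := by
    have hcfc : cfc d A' = A' - (1 - A') := by
      rw [hd_def, cfc_sub _ _ A' (by fun_prop) (by fun_prop), cfc_id' ℝ (a := A') hA'_sa,
        cfc_sub _ _ A' (by fun_prop) (by fun_prop), cfc_const_one ℝ A' hA'_sa,
        cfc_id' ℝ (a := A') hA'_sa]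
    rw [hcfc, ← hB'_eq, hA'_def, hB'_def, mul_sub, sub_mul]
  -- product identities
  have m3 : cfc d A' * cfc d A' = cfc (fun x => d x * d x) A' :=
    (cfc_mul _ _ A' hd_cont hd_cont).symm
  have m4 : cfc f A' * cfc (fun x => d x * d x) A' = cfc (fun x => f x * (d x * d x)) A' :=
    (cfc_mul _ _ A' hf_cont (hd_cont.mul hd_cont)).symm
  have hC2 : G * (Ring.inverse (A + B) * (A - B)) ^ 2
      = S * cfc (fun x => f x * (d x * d x)) A' * S := by
    rw [← m4, ← m3, ← hXGX, ← hD, hinvAB, sq]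
    simp only [mul_assoc, e1, e2, hXS, mul_one]
  have hh_nonneg : (0 : H →L[ℂ] H) ≤ cfc (fun x => f x * (d x * d x)) A' :=
    cfc_nonneg fun x hx => mul_nonneg (hf_nonneg x hx) (mul_self_nonneg _)
  have hpos : 0 ≤ G * (Ring.inverse (A + B) * (A - B)) ^ 2 := by
    rw [hC2]
    simpa [hS_sa.star_eq] using star_left_conjugate_nonneg hh_nonneg S
  refine ⟨le_add_of_nonneg_right (smul_nonneg (by norm_num) hpos), ?_⟩
  -- second inequality
  have hGrw : G = S * cfc f A' * S := by rw [← hXGX]; exact hG_eq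
  have hsmul : (1 / 2 : ℝ) • (S * cfc (fun x => f x * (d x * d x)) A' * S)
      = S * ((1 / 2 : ℝ) • cfc (fun x => f x * (d x * d x)) A') * S := by
    rw [mul_smul_comm, smul_mul_assoc]
  have m5 : (1 / 2 : ℝ) • cfc (fun x => f x * (d x * d x)) A'
      = cfc (fun x => (1 / 2 : ℝ) • (f x * (d x * d x))) A' :=
    (cfc_smul (1 / 2 : ℝ) _ A' (hf_cont.mul (hd_cont.mul hd_cont))).symm
  have m6 : cfc f A' + cfc (fun x => (1 / 2 : ℝ) • (f x * (d x * d x))) A'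
      = cfc (fun x => f x + (1 / 2 : ℝ) • (f x * (d x * d x))) A' :=
    (cfc_add A' _ _ hf_cont (Continuous.comp_continuousOn (continuous_const_smul _)
      (hf_cont.mul (hd_cont.mul hd_cont)))).symm
  have hM : G + (1 / 2 : ℝ) • (G * (Ring.inverse (A + B) * (A - B)) ^ 2)
      = S * cfc (fun x => f x + (1 / 2 : ℝ) • (f x * (d x * d x))) A' * S := by
    rw [hC2, hsmul, m5]
    nth_rewrite 1 [hGrw]
    rw [← m6, mul_add, add_mul]
  rw [hM]
  have hle : cfc (fun x => f x + (1 / 2 : ℝ) • (f x * (d x * d x))) A'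
      ≤ cfc (fun _ : ℝ => (1 / 2 : ℝ)) A' := by
    refine cfc_mono (fun x hx => ?_) (hf_cont.add (Continuous.comp_continuousOn
      (continuous_const_smul _) (hf_cont.mul (hd_cont.mul hd_cont)))) continuousOn_const
    obtain ⟨h0, h1, -⟩ := hspec x hx
    have hdx : d x * d x = (2 * x - 1) ^ 2 := by simp only [hd_def]; ring
    rw [smul_eq_mul, hdx]
    simp only [hf_def]
    exact scalar_key h0 h1
  have hconst : cfc (fun _ : ℝ => (1 / 2 : ℝ)) A' = (1 / 2 : ℝ) • (1 : H →L[ℂ] H) := by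
    rw [cfc_const _ A' hA'_sa, Algebra.algebraMap_eq_smul_one]
  calc S * cfc (fun x => f x + (1 / 2 : ℝ) • (f x * (d x * d x))) A' * S
      ≤ S * cfc (fun _ : ℝ => (1 / 2 : ℝ)) A' * S := hS_sa.conjugate_le_conjugate hle
    _ = (1 / 2 : ℝ) • (A + B) := by
        rw [hconst, mul_smul_comm, smul_mul_assoc, mul_one, hSS]
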